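/- Let P ⊂ ℚ^m be a rational polytope and let S be the graded semigroup of pairs (N, x) with N a nonnegative integer and x an integer point of the dilate N·P. If v is a vertex of P whose denominator is d > 1 (d the least positive integer with d·v ∈ ℤ^m), then the element (d, d·v) of S cannot be written as a sum of two nonzero elements of S; i.e., it is an essential generator of S. -/

import Mathlib

/-- An integer point `x ∈ ℤ^m` lying over the `N`-th dilate of `P ⊆ ℚ^m`. -/
def inDilate {m : ℕ} (P : Set (Fin m → ℚ)) (N : ℕ) (x : Fin m → ℤ) : Prop :=
  ∃ p ∈ P, (fun i => (x i : ℚ)) = (N : ℚ) • p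

/-- If `v` is a vertex of a convex (rational) polytope `P ⊆ ℚ^m` with denominator
`d > 1` (the least positive integer with `d • v` integral), then the element
`(d, d • v)` of the graded semigroup `S = {(N, x) ∈ ℕ × ℤ^m : x ∈ N·P}` is an
essential generator: it is not the sum of two nonzero elements of `S`. -/
theorem vertex_essential_generator {m : ℕ} (P : Set (Fin m → ℚ)) (hP : Convex ℚ P)
    (v : Fin m → ℚ) (hv : v ∈ P)
    (hvert : ∀ ε : Fin m → ℚ, v + ε ∈ P → v - ε ∈ P → ε = 0)
    (d : ℕ) (hd1 : 1 < d) (w : Fin m → ℤ) (hw : ∀ i, (w i : ℚ) = (d : ℚ) * v i)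
    (hdmin : ∀ d' : ℕ, 0 < d' → (∀ i, ∃ z : ℤ, (d' : ℚ) * v i = z) → d ≤ d') :
    ¬ ∃ (N₁ N₂ : ℕ) (x₁ x₂ : Fin m → ℤ),
        inDilate P N₁ x₁ ∧ inDilate P N₂ x₂ ∧
        (N₁, x₁) ≠ ((0 : ℕ), (0 : Fin m → ℤ)) ∧
        (N₂, x₂) ≠ ((0 : ℕ), (0 : Fin m → ℤ)) ∧
        N₁ + N₂ = d ∧ x₁ + x₂ = w := by
  rintro ⟨N₁, N₂, x₁, x₂, ⟨p₁, hp₁, hx₁⟩, ⟨p₂, hp₂, hx₂⟩, hne₁, hne₂, hN, hx⟩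
  have hN₁ : N₁ ≠ 0 := by
    rintro rfl
    apply hne₁
    have hx0 : x₁ = 0 := by
      funext i
      have h := congrFun hx₁ i
      simp at h
      exact_mod_cast h
    simp [hx0]
  have hN₂ : N₂ ≠ 0 := by
    rintro rfl
    apply hne₂
    have hx0 : x₂ = 0 := by
      funext i
      have h := congrFun hx₂ i
      simp at h
      exact_mod_cast h
    simp [hx0]
  have hd0 : (0:ℚ) < d := by exact_mod_cast Nat.lt_of_lt_of_le Nat.zero_lt_one hd1.le
  set a : ℚ := (N₁ : ℚ) / d with ha_def
  set b : ℚ := (N₂ : ℚ) / d with hb_def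
  have ha : 0 < a := div_pos (by exact_mod_cast Nat.pos_of_ne_zero hN₁) hd0
  have hb : 0 < b := div_pos (by exact_mod_cast Nat.pos_of_ne_zero hN₂) hd0
  have hab : a + b = 1 := by
    rw [ha_def, hb_def, ← add_div, div_eq_one_iff_eq hd0.ne']
    exact_mod_cast hN
  have hvv : v = a • p₁ + b • p₂ := by
    funext i
    have h1 := congrFun hx₁ i
    have h2 := congrFun hx₂ i
    simp only [smul_eq_mul, Pi.smul_apply] at h1 h2
    have h3 : (w i : ℚ) = (x₁ i : ℚ) + (x₂ i : ℚ) := by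
      rw [← hx]; push_cast; simp
    have hdv : (d:ℚ) * v i = (N₁:ℚ) * p₁ i + (N₂:ℚ) * p₂ i := by
      rw [← hw i, h3, h1, h2]
    simp only [Pi.add_apply, Pi.smul_apply, smul_eq_mul, ha_def, hb_def]
    field_simp
    linarith [hdv]
  set t : ℚ := min a b with ht_def
  have ht : 0 < t := lt_min ha hb
  have hat : t ≤ a := min_le_left a b
  have hbt : t ≤ b := min_le_right a b
  set ε : Fin m → ℚ := t • (p₁ - p₂) with hε_def
  have hmem1 : v + ε ∈ P := by
    have h := hP hp₁ hp₂ (by linarith : (0:ℚ) ≤ a + t) (by linarith : (0:ℚ) ≤ b - t)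
      (by linarith : (a + t) + (b - t) = 1)
    convert h using 1
    funext i
    simp only [hvv, hε_def, Pi.add_apply, Pi.smul_apply, Pi.sub_apply, smul_eq_mul]
    ring
  have hmem2 : v - ε ∈ P := by
    have h := hP hp₁ hp₂ (by linarith : (0:ℚ) ≤ a - t) (by linarith : (0:ℚ) ≤ b + t)
      (by linarith : (a - t) + (b + t) = 1)
    convert h using 1
    funext i
    simp only [hvv, hε_def, Pi.add_apply, Pi.sub_apply, Pi.smul_apply, smul_eq_mul]
    ring
  have hε0 := hvert ε hmem1 hmem2
  have hpp : p₁ = p₂ := by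
    funext i
    have h := congrFun hε0 i
    simp only [hε_def, Pi.smul_apply, Pi.sub_apply, smul_eq_mul, Pi.zero_apply] at h
    rcases mul_eq_zero.mp h with h' | h'
    · exact absurd h' ht.ne'
    · linarith
  have hvp : v = p₁ := by
    funext i
    rw [hvv]
    simp only [Pi.add_apply, Pi.smul_apply, smul_eq_mul, ← hpp]
    rw [← add_mul, hab, one_mul]
  have hle : d ≤ N₁ := by
    refine hdmin N₁ (Nat.pos_of_ne_zero hN₁) fun i => ⟨x₁ i, ?_⟩
    have h1 := congrFun hx₁ i
    simp only [smul_eq_mul, Pi.smul_apply] at h1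
    rw [hvp, ← h1]
  omega
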